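/- Let s be a real number and let A be a complex 2×2 matrix whose characteristic polynomial is (X − s)(X − (1−s)). Then for every n ≥ 1, the n-fold Kronecker power A^{⊗n} has characteristic polynomial ∏_{j=0}^{n} (X − s^{n−j}(1−s)^j)^{C(n,j)}, where C(n,j) is the binomial coefficient; that is, the eigenvalues of A^{⊗n} are s^{n−j}(1−s)^j with algebraic multiplicity C(n,j) for j = 0, …, n. -/

import Mathlib

open Matrix Polynomial

/-- The `n`-fold Kronecker power of a square matrix `A`, indexed by `Fin n → m`
(the entry at `(i, j)` is `∏ k, A (i k) (j k)`, which is exactly the iterated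
Kronecker product `A ⊗ A ⊗ ⋯ ⊗ A` under the canonical identification of the
index types). -/
noncomputable def kronPow {m : Type*} [Fintype m] (A : Matrix m m ℂ) (n : ℕ) :
    Matrix (Fin n → m) (Fin n → m) ℂ :=
  fun i j => ∏ k, A (i k) (j k)

lemma kronPow_mul {m : Type*} [Fintype m] [DecidableEq m] (A B : Matrix m m ℂ) (n : ℕ) :
    kronPow (A * B) n = kronPow A n * kronPow B n := by
  ext i j
  simp only [kronPow, Matrix.mul_apply]
  rw [Finset.prod_univ_sum]
  rw [Fintype.piFinset_univ]
  exact Finset.sum_congr rfl fun p _ => Finset.prod_mul_distrib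

lemma kronPow_one {m : Type*} [Fintype m] [DecidableEq m] (n : ℕ) :
    kronPow (1 : Matrix m m ℂ) n = 1 := by
  ext i j
  by_cases h : i = j
  · simp [kronPow, h, Matrix.one_apply]
  · obtain ⟨k, hk⟩ := Function.ne_iff.mp h
    rw [Matrix.one_apply_ne h]
    exact Finset.prod_eq_zero (Finset.mem_univ k) (Matrix.one_apply_ne hk)

lemma charmatrix_eq {m : Type*} [Fintype m] [DecidableEq m] {R : Type*} [CommRing R]
    (M : Matrix m m R) : charmatrix M = (X : R[X]) • (1 : Matrix m m R[X]) - M.map C := by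
  ext i j
  by_cases h : i = j
  · subst h; simp [charmatrix_apply_eq, Matrix.one_apply]
  · simp [charmatrix_apply_ne _ _ _ h, Matrix.one_apply_ne h]

lemma charpoly_conj {m : Type*} [Fintype m] [DecidableEq m] (P A Q : Matrix m m ℂ)
    (hPQ : P * Q = 1) : (P * A * Q).charpoly = A.charpoly := by
  have hPQ' : P.map (C : ℂ →+* ℂ[X]) * Q.map C = 1 := by
    rw [← Matrix.map_mul, hPQ]; simp
  have h1 : charmatrix (P * A * Q) = P.map C * charmatrix A * Q.map C := by
    rw [charmatrix_eq, charmatrix_eq, Matrix.mul_sub, Matrix.sub_mul]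
    congr 1
    · rw [Matrix.mul_smul, Matrix.mul_one, Matrix.smul_mul, hPQ']
    · rw [Matrix.map_mul, Matrix.map_mul]
  rw [Matrix.charpoly, Matrix.charpoly, h1, Matrix.det_mul, Matrix.det_mul]
  have : (P.map (C : ℂ →+* ℂ[X])).det * (Q.map C).det = 1 := by
    rw [← Matrix.det_mul, hPQ']; simp
  ring_nf
  calc (P.map (C : ℂ →+* ℂ[X])).det * (charmatrix A).det * (Q.map C).det
      = (charmatrix A).det * ((P.map C).det * (Q.map C).det) := by ring
    _ = (charmatrix A).det := by rw [this, mul_one]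

lemma det_of_triangular {m : Type*} [Fintype m] [DecidableEq m] {R : Type*} [CommRing R]
    (M : Matrix m m R) (b : m → ℕ) (hb : Function.Injective b)
    (h : ∀ i j, b j < b i → M i j = 0) : M.det = ∏ i, M i i := by
  rw [Matrix.det_apply']
  rw [Finset.sum_eq_single (1 : Equiv.Perm m)]
  · simp
  · intro σ _ hσ
    rcases em (∀ i, M (σ i) i ≠ 0) with hz | hz
    · exfalso
      apply hσ
      have hle : ∀ i ∈ Finset.univ, b (σ i) ≤ b i :=
        fun i _ => le_of_not_gt (fun hlt => hz i (h _ _ hlt))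
      have hsum : ∑ i, b (σ i) = ∑ i, b i := Equiv.sum_comp σ b
      have heach := (Finset.sum_eq_sum_iff_of_le hle).mp hsum
      exact Equiv.ext fun x => hb (heach x (Finset.mem_univ x))
    · push_neg at hz
      obtain ⟨i, hi⟩ := hz
      exact mul_eq_zero_of_right _ (Finset.prod_eq_zero (Finset.mem_univ i) hi)
  · intro h1; exact absurd (Finset.mem_univ _) h1

lemma bin_inj : ∀ n : ℕ, Function.Injective
    (fun i : Fin n → Fin 2 => ∑ k, (i k : ℕ) * 2 ^ (k : ℕ)) := by
  intro n
  induction n with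
  | zero => exact fun i j _ => Subsingleton.elim i j
  | succ n ih =>
    intro i j hij
    simp only [Fin.sum_univ_succ, Fin.val_zero, pow_zero, mul_one, Fin.val_succ,
      pow_succ'] at hij
    have hre : ∀ f : Fin (n+1) → Fin 2,
        ∑ k : Fin n, (f k.succ : ℕ) * (2 * 2 ^ (k : ℕ))
          = 2 * ∑ k : Fin n, (f k.succ : ℕ) * 2 ^ (k : ℕ) := by
      intro f
      rw [Finset.mul_sum]
      exact Finset.sum_congr rfl fun k _ => by ring
    rw [hre i, hre j] at hij
    have h0 : (i 0 : ℕ) ≤ 1 := Nat.lt_succ_iff.mp (i 0).isLt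
    have h1 : (j 0 : ℕ) ≤ 1 := Nat.lt_succ_iff.mp (j 0).isLt
    have hv0 : (i 0 : ℕ) = (j 0 : ℕ) ∧
        ∑ k : Fin n, (i k.succ : ℕ) * 2 ^ (k : ℕ) = ∑ k : Fin n, (j k.succ : ℕ) * 2 ^ (k : ℕ) := by
      omega
    have htail : (fun k : Fin n => i k.succ) = (fun k : Fin n => j k.succ) := ih hv0.2
    funext k
    refine Fin.cases ?_ ?_ k
    · exact Fin.val_injective hv0.1
    · intro k'
      exact congrFun htail k'

lemma card_weight (n j : ℕ) :
    (Finset.univ.filter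
      (fun i : Fin n → Fin 2 => (Finset.univ.filter (fun k => i k = 1)).card = j)).card
      = n.choose j := by
  classical
  have h := Finset.card_powersetCard j (Finset.univ : Finset (Fin n))
  rw [Finset.card_univ, Fintype.card_fin] at h
  rw [← h]
  apply Finset.card_nbij'
    (i := fun i => Finset.univ.filter (fun k => i k = 1))
    (j := fun σ => fun k => if k ∈ σ then 1 else 0)
  · intro a ha
    rw [Finset.mem_coe] at ha ⊢
    rw [Finset.mem_filter] at ha
    rw [Finset.mem_powersetCard]
    exact ⟨Finset.filter_subset _ _, ha.2⟩
  · intro σ hσ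
    rw [Finset.mem_coe] at hσ ⊢
    rw [Finset.mem_powersetCard] at hσ
    rw [Finset.mem_filter]
    refine ⟨Finset.mem_univ _, ?_⟩
    rw [← hσ.2]
    congr 1
    ext k
    simp only [Finset.mem_filter, Finset.mem_univ, true_and]
    by_cases hk : k ∈ σ <;> simp [hk]
  · intro a ha
    funext k
    by_cases hk : a k = 1
    · simp [hk]
    · have : a k = 0 := by omega
      simp only [Finset.mem_filter, Finset.mem_univ, true_and]
      rw [if_neg hk, this]
  · intro σ hσ
    ext k
    simp only [Finset.mem_filter, Finset.mem_univ, true_and]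
    by_cases hk : k ∈ σ <;> simp [hk]

lemma charpoly_kron_tri (T : Matrix (Fin 2) (Fin 2) ℂ) (hT : T 1 0 = 0) (n : ℕ) :
    (kronPow T n).charpoly =
      ∏ j ∈ Finset.range (n + 1), (X - C (T 0 0 ^ (n - j) * T 1 1 ^ j)) ^ n.choose j := by
  classical
  set b : (Fin n → Fin 2) → ℕ := fun i => ∑ k, (i k : ℕ) * 2 ^ (k : ℕ) with hb
  have hbinj : Function.Injective b := bin_inj n
  have htri : ∀ i j : Fin n → Fin 2, b j < b i → kronPow T n i j = 0 := by
    intro i j hlt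
    by_contra hne
    have hfac : ∀ k, T (i k) (j k) ≠ 0 := by
      intro k hk
      exact hne (Finset.prod_eq_zero (Finset.mem_univ k) hk)
    have hle : ∀ k, (i k : ℕ) ≤ (j k : ℕ) := by
      intro k
      by_contra hgt
      have h1 : i k = 1 := by omega
      have h0 : j k = 0 := by omega
      exact hfac k (by rw [h1, h0]; exact hT)
    have : b i ≤ b j :=
      Finset.sum_le_sum fun k _ => Nat.mul_le_mul_right _ (hle k)
    omega
  -- determinant of the charmatrix
  rw [Matrix.charpoly]
  rw [det_of_triangular _ b hbinj (by
    intro i j hlt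
    have hij : i ≠ j := fun h => by simp [h] at hlt
    rw [charmatrix_apply_ne _ _ _ hij, htri i j hlt, map_zero, neg_zero])]
  have hdiag : ∀ i : Fin n → Fin 2,
      charmatrix (kronPow T n) i i
        = X - C (T 0 0 ^ (n - (Finset.univ.filter (fun k => i k = 1)).card)
            * T 1 1 ^ (Finset.univ.filter (fun k => i k = 1)).card) := by
    intro i
    rw [charmatrix_apply_eq]
    congr 1
    congr 1
    have : kronPow T n i i = ∏ k, (if i k = 1 then T 1 1 else T 0 0) := by
      apply Finset.prod_congr rfl
      intro k _
      by_cases h : i k = 1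
      · rw [h, if_pos rfl]
      · have h0 : i k = 0 := by omega
        rw [h0, if_neg (by decide)]
    rw [this, Finset.prod_ite, Finset.prod_const, Finset.prod_const]
    have hcard : (Finset.univ.filter (fun k => ¬ i k = 1)).card
        = n - (Finset.univ.filter (fun k => i k = 1)).card := by
      have := Finset.card_filter_add_card_filter_not
        (s := (Finset.univ : Finset (Fin n))) (p := fun k => i k = 1)
      simp only [Finset.card_univ, Fintype.card_fin] at this
      omega
    rw [hcard, mul_comm]
  rw [Finset.prod_congr rfl fun i _ => hdiag i]
  -- group by weight
  set w : (Fin n → Fin 2) → ℕ := fun i => (Finset.univ.filter (fun k => i k = 1)).card with hw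
  have hmaps : ∀ i : Fin n → Fin 2, i ∈ Finset.univ → w i ∈ Finset.range (n + 1) := by
    intro i _
    rw [Finset.mem_range]
    show (Finset.univ.filter (fun k => i k = 1)).card < n + 1
    have := (Finset.card_filter_le (Finset.univ : Finset (Fin n)) (fun k => i k = 1))
    simp only [Finset.card_univ, Fintype.card_fin] at this
    omega
  rw [← Finset.prod_fiberwise_of_maps_to hmaps]
  apply Finset.prod_congr rfl
  intro j hj
  have : ∀ i ∈ Finset.univ.filter (fun i => w i = j),
      (X - C (T 0 0 ^ (n - w i) * T 1 1 ^ (w i)))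
        = X - C (T 0 0 ^ (n - j) * T 1 1 ^ j) := by
    intro i hi
    rw [(Finset.mem_filter.mp hi).2]
  rw [Finset.prod_congr rfl this, Finset.prod_const, card_weight]
lemma eval_charpoly {m : Type*} [Fintype m] [DecidableEq m] (M : Matrix m m ℂ) (x : ℂ) :
    M.charpoly.eval x = (x • (1 : Matrix m m ℂ) - M).det := by
  rw [Matrix.charpoly, ← Polynomial.coe_evalRingHom, RingHom.map_det]
  congr 1
  ext i j
  by_cases h : i = j
  · subst h
    simp [charmatrix_apply_eq, Matrix.one_apply]
  · simp [charmatrix_apply_ne _ _ _ h, Matrix.one_apply_ne h]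


/-- If a complex `2×2` matrix `A` has characteristic polynomial `(X−s)(X−(1−s))`,
then its `n`-fold Kronecker power has characteristic polynomial
`∏_{j=0}^{n} (X − s^{n−j}(1−s)^j)^{C(n,j)}`. -/
theorem charpoly_kronPow (s : ℝ) (A : Matrix (Fin 2) (Fin 2) ℂ)
    (hA : A.charpoly = (X - C (s : ℂ)) * (X - C (1 - (s : ℂ))))
    (n : ℕ) (hn : 1 ≤ n) :
    (kronPow A n).charpoly =
      ∏ j ∈ Finset.range (n + 1),
        (X - C ((s : ℂ) ^ (n - j) * (1 - (s : ℂ)) ^ j)) ^ n.choose j := by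
  classical
  have htr : A.trace = 1 := by
    rw [Matrix.trace_eq_sum_roots_charpoly, hA]
    rw [Polynomial.roots_mul
      (mul_ne_zero (Polynomial.X_sub_C_ne_zero _) (Polynomial.X_sub_C_ne_zero _))]
    rw [Polynomial.roots_X_sub_C, Polynomial.roots_X_sub_C]
    simp
  have hdet : (((s : ℂ)) • (1 : Matrix (Fin 2) (Fin 2) ℂ) - A).det = 0 := by
    rw [← _root_.eval_charpoly, hA]; simp
  obtain ⟨v, hv, hmv⟩ := (Matrix.exists_mulVec_eq_zero_iff).mpr hdet
  have heig : A.mulVec v = (s : ℂ) • v := by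
    rw [Matrix.sub_mulVec, sub_eq_zero] at hmv
    rw [← hmv, Matrix.smul_mulVec, Matrix.one_mulVec]
  have h0 := congrFun heig 0
  have h1 := congrFun heig 1
  simp only [Matrix.mulVec, dotProduct, Fin.sum_univ_two, Pi.smul_apply,
    smul_eq_mul] at h0 h1
  obtain ⟨P, Q, hPQ, hT10, hT00⟩ : ∃ P Q : Matrix (Fin 2) (Fin 2) ℂ, P * Q = 1 ∧
      (Q * A * P) 1 0 = 0 ∧ (Q * A * P) 0 0 = (s : ℂ) := by
    rcases em (v 0 = 0) with hv0 | hv0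
    · have hv1 : v 1 ≠ 0 := by
        intro hv1
        exact hv (funext fun k => by fin_cases k <;> simpa [hv0, hv1])
      refine ⟨!![0, 1; v 1, 0], !![0, (v 1)⁻¹; 1, 0], ?_, ?_, ?_⟩
      · ext i j
        fin_cases i <;> fin_cases j <;>
          simp [Matrix.mul_apply, Fin.sum_univ_two, Matrix.one_apply] <;> field_simp
      · simp only [Matrix.mul_apply, Fin.sum_univ_two, Matrix.cons_val', Matrix.cons_val_zero,
          Matrix.cons_val_one, Matrix.head_cons, Matrix.head_fin_const, Matrix.empty_val',
          Matrix.cons_val_fin_one, Matrix.of_apply]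
        rw [hv0] at h0
        linear_combination h0
      · simp only [Matrix.mul_apply, Fin.sum_univ_two, Matrix.cons_val', Matrix.cons_val_zero,
          Matrix.cons_val_one, Matrix.head_cons, Matrix.head_fin_const, Matrix.empty_val',
          Matrix.cons_val_fin_one, Matrix.of_apply]
        rw [hv0] at h1
        have hA11 : A 1 1 = (s : ℂ) := by
          rw [mul_zero, zero_add] at h1
          exact mul_right_cancel₀ hv1 h1
        rw [hA11]
        field_simp
        ring
    · refine ⟨!![v 0, 0; v 1, 1], !![(v 0)⁻¹, 0; -(v 1) * (v 0)⁻¹, 1], ?_, ?_, ?_⟩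
      · ext i j
        fin_cases i <;> fin_cases j <;>
          simp [Matrix.mul_apply, Fin.sum_univ_two, Matrix.one_apply] <;> field_simp
      · simp only [Matrix.mul_apply, Fin.sum_univ_two, Matrix.cons_val', Matrix.cons_val_zero,
          Matrix.cons_val_one, Matrix.head_cons, Matrix.head_fin_const, Matrix.empty_val',
          Matrix.cons_val_fin_one, Matrix.of_apply]
        field_simp
        linear_combination (- v 1) * h0 + (v 0) * h1
      · simp only [Matrix.mul_apply, Fin.sum_univ_two, Matrix.cons_val', Matrix.cons_val_zero,
          Matrix.cons_val_one, Matrix.head_cons, Matrix.head_fin_const, Matrix.empty_val',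
          Matrix.cons_val_fin_one, Matrix.of_apply]
        field_simp
        linear_combination h0
  set T := Q * A * P with hTdef
  have hTtr : T.trace = 1 := by
    rw [hTdef, Matrix.trace_mul_comm, ← mul_assoc, hPQ, one_mul, htr]
  have hT11 : T 1 1 = 1 - (s : ℂ) := by
    rw [Matrix.trace_fin_two] at hTtr
    rw [← hTtr, hT00]
    ring
  have hA' : A = P * T * Q := by
    rw [hTdef]
    have : P * (Q * A * P) * Q = P * Q * A * (P * Q) := by
      simp only [mul_assoc]
    rw [this, hPQ, one_mul, mul_one]
  rw [hA', kronPow_mul, kronPow_mul,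
    charpoly_conj _ _ _ (by rw [← kronPow_mul, hPQ, kronPow_one]),
    charpoly_kron_tri _ hT10, hT00, hT11]
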